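/- Inverse roach motel reordering is a valid refinement: for the concrete threads T and T'' defined below, check(T'',T) holds. -/

import Mathlib

namespace DRF

/-! Common model: shared-memory concurrency with locks (SC-for-DRF). -/

/-- An action: read or write a memory location, or acquire/release a lock. -/
inductive Action (M L : Type) : Type where
  | rd : M → Action M L
  | wr : M → Action M L
  | lk : L → Action M L
  | ul : L → Action M L
deriving DecidableEq

/-- A thread: a deterministic labelled transition system with program counters `H`,
initial counter `h0`, and a partial step function; `rd/lk/ul` leave the state unchanged,
a `wr x` step may change the state only at `x`. -/
structure Thread (M L : Type) where
  H : Type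
  h0 : H
  step : H → (M → ℤ) → Option (Action M L × H × (M → ℤ))
  wf : ∀ h s a h' s', step h s = some (a, h', s') →
      ((∀ x, a ≠ Action.wr x) → s' = s) ∧
      (∀ x, a = Action.wr x → ∀ y, y ≠ x → s' y = s y)

/-- A program: a finite family of threads. -/
structure Program (M L : Type) where
  n : ℕ
  threads : Fin n → Thread M L

/-- A configuration: one program counter per thread, a state, and a lock map. -/
structure Config {M L : Type} (P : Program M L) where
  pcs : ∀ i : Fin P.n, (P.threads i).H
  st : M → ℤ
  lks : L → Option (Fin P.n)

/-- The interleaving transition relation: thread `i` performs its next step with action `a`. -/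
def ProgStep {M L : Type} [DecidableEq M] [DecidableEq L] (P : Program M L)
    (c : Config P) (i : Fin P.n) (a : Action M L) (c' : Config P) : Prop :=
  ∃ (h' : (P.threads i).H) (s' : M → ℤ),
    (P.threads i).step (c.pcs i) c.st = some (a, h', s') ∧
    c'.pcs = Function.update c.pcs i h' ∧
    c'.st = s' ∧
    (match a with
     | Action.rd _ => c'.lks = c.lks
     | Action.wr _ => c'.lks = c.lks
     | Action.lk l => c.lks l = none ∧ c'.lks = Function.update c.lks l (some i)
     | Action.ul l => c.lks l = some i ∧ c'.lks = Function.update c.lks l none)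

/-- An execution prefix of `P` from state `s0` with `n` transition steps. -/
structure ExecPrefix {M L : Type} [DecidableEq M] [DecidableEq L] (P : Program M L)
    (s0 : M → ℤ) (n : ℕ) where
  cfg : Fin (n + 1) → Config P
  thr : Fin n → Fin P.n
  act : Fin n → Action M L
  init_pcs : ∀ i, (cfg 0).pcs i = (P.threads i).h0
  init_st : (cfg 0).st = s0
  init_lks : ∀ l, (cfg 0).lks l = none
  steps : ∀ k : Fin n, ProgStep P (cfg k.castSucc) (thr k) (act k) (cfg k.succ)

variable {M L : Type} [DecidableEq M] [DecidableEq L]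

/-- Action `a` is a memory access of location `x`. -/
def isAccess (a : Action M L) (x : M) : Prop := a = Action.rd x ∨ a = Action.wr x

/-- Steps `i` and `j` conflict: both access the same location and at least one writes it. -/
def Conflict {P : Program M L} {s0 : M → ℤ} {n : ℕ} (e : ExecPrefix P s0 n)
    (i j : Fin n) : Prop :=
  ∃ x : M, isAccess (e.act i) x ∧ isAccess (e.act j) x ∧
    (e.act i = Action.wr x ∨ e.act j = Action.wr x)

/-- Sequenced-before. -/
def sb {P : Program M L} {s0 : M → ℤ} {n : ℕ} (e : ExecPrefix P s0 n) (i j : Fin n) : Prop :=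
  i < j ∧ e.thr i = e.thr j

/-- Synchronizes-with. -/
def sw {P : Program M L} {s0 : M → ℤ} {n : ℕ} (e : ExecPrefix P s0 n) (i j : Fin n) : Prop :=
  i < j ∧ ∃ l : L, e.act i = Action.ul l ∧ e.act j = Action.lk l

/-- Happens-before: the transitive closure of `sb ∪ sw`. -/
def hb {P : Program M L} {s0 : M → ℤ} {n : ℕ} (e : ExecPrefix P s0 n) (i j : Fin n) : Prop :=
  Relation.TransGen (fun p q => sb e p q ∨ sw e p q) i j

/-- `e` contains an hb data race. -/
def hbrace {P : Program M L} {s0 : M → ℤ} {n : ℕ} (e : ExecPrefix P s0 n) : Prop :=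
  ∃ i j : Fin n, i < j ∧ e.thr i ≠ e.thr j ∧ Conflict e i j ∧ ¬ hb e i j

/-- `e` contains an adjacent-access data race. -/
def aarace {P : Program M L} {s0 : M → ℤ} {n : ℕ} (e : ExecPrefix P s0 n) : Prop :=
  ∃ i j : Fin n, (j : ℕ) = (i : ℕ) + 1 ∧ e.thr i ≠ e.thr j ∧ Conflict e i j

/-- Some execution of `P` contains an adjacent-access data race. -/
def race (P : Program M L) : Prop :=
  ∃ (s0 : M → ℤ) (n : ℕ) (e : ExecPrefix P s0 n), aarace e

def racefree (P : Program M L) : Prop := ¬ race P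

/-- All threads have terminated in configuration `c`. -/
def terminatedAll (P : Program M L) (c : Config P) : Prop :=
  ∀ i : Fin P.n, (P.threads i).step (c.pcs i) c.st = none

/-- Program semantics: the set of initial/final state pairs of finite complete executions. -/
def Msem (P : Program M L) : Set ((M → ℤ) × (M → ℤ)) :=
  { p | ∃ (n : ℕ) (e : ExecPrefix P p.1 n),
      terminatedAll P (e.cfg (Fin.last n)) ∧ (e.cfg (Fin.last n)).st = p.2 }

/-- `T ∥ C`: the program consisting of `T` together with the threads of `C`. -/
def par (T : Thread M L) (C : Program M L) : Program M L :=
  ⟨C.n + 1, Fin.cons T C.threads⟩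

/-! Thread-alone executions. -/

/-- An execution fragment of thread `T` run alone, with `n` steps. -/
structure Frag (T : Thread M L) (n : ℕ) where
  pc : Fin (n + 1) → T.H
  st : Fin (n + 1) → (M → ℤ)
  act : Fin n → Action M L
  steps : ∀ k : Fin n, T.step (pc k.castSucc) (st k.castSucc) = some (act k, pc k.succ, st k.succ)

/-- An infinite execution of thread `T` run alone. -/
structure InfRun (T : Thread M L) where
  pc : ℕ → T.H
  st : ℕ → (M → ℤ)
  act : ℕ → Action M L
  steps : ∀ k : ℕ, T.step (pc k) (st k) = some (act k, pc (k + 1), st (k + 1))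

/-- Number of `lk l` steps among the first `k` steps of `f`. -/
def lkCnt {T : Thread M L} {n : ℕ} (f : Frag T n) (l : L) (k : ℕ) : ℕ :=
  (Finset.univ.filter (fun i : Fin n => (i : ℕ) < k ∧ f.act i = Action.lk l)).card

/-- Number of `ul l` steps among the first `k` steps of `f`. -/
def ulCnt {T : Thread M L} {n : ℕ} (f : Frag T n) (l : L) (k : ℕ) : ℕ :=
  (Finset.univ.filter (fun i : Fin n => (i : ℕ) < k ∧ f.act i = Action.ul l)).card

/-- `T` is well-locked for lock `l`: run alone from its initial counter, its first step is
`lk l`; `lk l` and `ul l` steps strictly alternate starting with `lk l`; every infinite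
execution contains infinitely many lock operations; and every terminated execution has as
many `ul l` steps as `lk l` steps (the last `lk l` is matched by an `ul l`). -/
def WellLocked (T : Thread M L) (l : L) : Prop :=
  (∀ s a h' s', T.step T.h0 s = some (a, h', s') → a = Action.lk l) ∧
  (∀ (n : ℕ) (f : Frag T n), f.pc 0 = T.h0 →
     ∀ k : Fin n,
       (f.act k = Action.lk l → lkCnt f l k = ulCnt f l k) ∧
       (f.act k = Action.ul l → lkCnt f l k = ulCnt f l k + 1)) ∧
  (∀ r : InfRun T, r.pc 0 = T.h0 →
     ∀ m : ℕ, ∃ k : ℕ, m ≤ k ∧ ((∃ l' : L, r.act k = Action.lk l') ∨ (∃ l' : L, r.act k = Action.ul l'))) ∧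
  (∀ (n : ℕ) (f : Frag T n), f.pc 0 = T.h0 →
     T.step (f.pc (Fin.last n)) (f.st (Fin.last n)) = none →
     lkCnt f l n = ulCnt f l n)

/-- Action `a` is a memory access (read or write). -/
def isMem : Action M L → Prop
  | Action.rd _ => True
  | Action.wr _ => True
  | _ => False

/-- `(T,h,s) →* (T,h',s')` with label `(l,(Ra,Wa),(Rb,Wb))`: `T` run alone goes from `(h,s)`
to `(h',s')` by one `lk l` step, then memory steps, one `ul l` step, then memory steps,
ending exactly when `T`'s next action is a lock acquire or `T` has terminated; `Ra`/`Wa` are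
the locations read/written strictly between the `lk` and the `ul`, and `Rb`/`Wb` those
read/written after the `ul`. -/
def StarStep (T : Thread M L) (h : T.H) (s : M → ℤ) (l : L)
    (Ra Wa Rb Wb : Set M) (h' : T.H) (s' : M → ℤ) : Prop :=
  ∃ (n : ℕ) (f : Frag T n) (hn : 0 < n) (k : Fin n),
    f.pc 0 = h ∧ f.st 0 = s ∧
    f.pc (Fin.last n) = h' ∧ f.st (Fin.last n) = s' ∧
    f.act ⟨0, hn⟩ = Action.lk l ∧
    f.act k = Action.ul l ∧
    (∀ i : Fin n, 0 < (i : ℕ) → (i : ℕ) < (k : ℕ) → isMem (f.act i)) ∧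
    (∀ i : Fin n, (k : ℕ) < (i : ℕ) → isMem (f.act i)) ∧
    ((∃ (l'' : L) (h'' : T.H) (s'' : M → ℤ), T.step h' s' = some (Action.lk l'', h'', s'')) ∨
      T.step h' s' = none) ∧
    Ra = {x : M | ∃ i : Fin n, 0 < (i : ℕ) ∧ (i : ℕ) < (k : ℕ) ∧ f.act i = Action.rd x} ∧
    Wa = {x : M | ∃ i : Fin n, 0 < (i : ℕ) ∧ (i : ℕ) < (k : ℕ) ∧ f.act i = Action.wr x} ∧
    Rb = {x : M | ∃ i : Fin n, (k : ℕ) < (i : ℕ) ∧ f.act i = Action.rd x} ∧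
    Wb = {x : M | ∃ i : Fin n, (k : ℕ) < (i : ℕ) ∧ f.act i = Action.wr x}

/-- A state trace with `m` lock-to-lock transitions: trace item `2*j` (at a `lk`) is
`(lkOf j, sE j, RE j, WE j)` and trace item `2*j+1` (from the `ul` to the next `lk`) is
`(RO j, WO j, sO j)`; components at indices `≥ m` are irrelevant junk. -/
structure STrace (M L : Type) where
  m : ℕ
  lkOf : ℕ → L
  sE : ℕ → (M → ℤ)
  sO : ℕ → (M → ℤ)
  RE : ℕ → Set M
  WE : ℕ → Set M
  RO : ℕ → Set M
  WO : ℕ → Set M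

/-- Accessed locations at even item `2*j`. -/
def AE {M L : Type} (t : STrace M L) (j : ℕ) : Set M := t.RE j ∪ t.WE j

/-- Accessed locations at odd item `2*j+1`. -/
def AO {M L : Type} (t : STrace M L) (j : ℕ) : Set M := t.RO j ∪ t.WO j

/-- The state trace set `𝕊(T)` of a thread `T`. -/
def STraces (T : Thread M L) : Set (STrace M L) :=
  { t | ∃ h : ℕ → T.H,
      h 0 = T.h0 ∧
      (∀ j < t.m, StarStep T (h j) (t.sE j) (t.lkOf j)
        (t.RE j) (t.WE j) (t.RO j) (t.WO j) (h (j + 1)) (t.sO j)) ∧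
      (∀ j, 0 < j → j < t.m → ∀ x ∈ AO t (j - 1), t.sO (j - 1) x = t.sE j x) }

/-- The length-`2*m` prefixes of the state traces `t'` and `t` match
(primed components from `t'`, unprimed from `t`). -/
def matchN {M L : Type} (t' t : STrace M L) (m : ℕ) : Prop :=
  (∀ j < m, t'.lkOf j = t.lkOf j) ∧
  (∀ j < m, t'.RE j ⊆ (if j = 0 then (∅ : Set M) else AO t (j - 1)) ∪ AE t j ∪ AO t j) ∧
  (∀ j < m, t'.WE j ⊆ (if j = 0 then (∅ : Set M) else t.WO (j - 1)) ∪ t.WE j ∪ t.WO j) ∧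
  (∀ j < m, t'.RO j ⊆ AO t j) ∧
  (∀ j < m, t'.WO j ⊆ t.WO j) ∧
  (∀ j < m, ∀ x : M, (j = 0 ∨ x ∉ AO t (j - 1)) → t'.sE j x = t.sE j x) ∧
  (∀ j, 0 < j → j < m → ∀ x ∈ AO t (j - 1) \ AO t' (j - 1), t'.sO (j - 1) x = t'.sE j x) ∧
  (∀ j < m, ∀ x ∉ t.WO j, t'.sO j x = t.sO j x)

/-- Two complete state traces match. -/
def matchTr {M L : Type} (t' t : STrace M L) : Prop :=
  t'.m = t.m ∧ matchN t' t t.m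

/-- The state-based refinement check `check(T',T)`. -/
def check (T' T : Thread M L) : Prop :=
  ∀ t' ∈ STraces T', ∃ t ∈ STraces T,
    matchTr t' t ∨
    (∃ p : ℕ, 0 < p ∧ p < t'.m ∧ p ≤ t.m ∧ matchN t' t p ∧
      ∃ x ∈ AO t (p - 1) \ AO t' (p - 1), t'.sO (p - 1) x ≠ t'.sE p x)

/-- Refinement `ref(T',T)`: for every context `C` (a finite family of threads well-locked
for `l`), if `T ∥ C` is race free then so is `T' ∥ C` and `𝕄(T' ∥ C) ⊆ 𝕄(T ∥ C)`. -/
def ref (T' T : Thread M L) (l : L) : Prop :=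
  ∀ C : Program M L, (∀ i : Fin C.n, WellLocked (C.threads i) l) →
    racefree (par T C) →
    racefree (par T' C) ∧ Msem (par T' C) ⊆ Msem (par T C)

/-- In configuration `c`, the next action of thread `t` is a lock acquire. -/
def nextIsLk (P : Program M L) (c : Config P) (t : Fin P.n) : Prop :=
  ∃ (l : L) (h' : (P.threads t).H) (s' : M → ℤ),
    (P.threads t).step (c.pcs t) c.st = some (Action.lk l, h', s')

/-- In configuration `c`, thread `t` has terminated. -/
def termAt (P : Program M L) (c : Config P) (t : Fin P.n) : Prop :=
  (P.threads t).step (c.pcs t) c.st = none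


/-! Concrete threads: memory locations `M = Fin 2` (`0` is `x`, `1` is `y`),
locks `L = Fin 1` (`0` is `l`). -/

/-- Step function of the original thread `T`: `lk l; x := 1; y := 1; ul l; y := 2; stop`. -/
def stepOrig : Fin 6 → (Fin 2 → ℤ) → Option (Action (Fin 2) (Fin 1) × Fin 6 × (Fin 2 → ℤ)) :=
  fun h s =>
    if h = 0 then some (Action.lk 0, 1, s)
    else if h = 1 then some (Action.wr 0, 2, Function.update s 0 1)
    else if h = 2 then some (Action.wr 1, 3, Function.update s 1 1)
    else if h = 3 then some (Action.ul 0, 4, s)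
    else if h = 4 then some (Action.wr 1, 5, Function.update s 1 2)
    else none

/-- The original thread `T`: `lk l; x := 1; y := 1; ul l; y := 2`. -/
def Torig : Thread (Fin 2) (Fin 1) where
  H := Fin 6
  h0 := 0
  step := stepOrig
  wf := by
    intro h s a h' s' hst
    fin_cases h <;> simp [stepOrig] at hst
    all_goals obtain ⟨rfl, rfl, rfl⟩ := hst
    all_goals constructor
    all_goals first
      | (intro hx; exact absurd rfl (hx _))
      | (intro _; rfl)
      | (intro x hx y hy
         cases hx
         exact Function.update_of_ne hy _ _)
      | (intro x hx; exact absurd hx (by simp))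

/-- Step function of the transformed thread `T''` (inverse roach motel reordering):
`lk l; x := 1; ul l; y := 1; y := 2; stop`. -/
def stepTransInv : Fin 6 → (Fin 2 → ℤ) → Option (Action (Fin 2) (Fin 1) × Fin 6 × (Fin 2 → ℤ)) :=
  fun h s =>
    if h = 0 then some (Action.lk 0, 1, s)
    else if h = 1 then some (Action.wr 0, 2, Function.update s 0 1)
    else if h = 2 then some (Action.ul 0, 3, s)
    else if h = 3 then some (Action.wr 1, 4, Function.update s 1 1)
    else if h = 4 then some (Action.wr 1, 5, Function.update s 1 2)
    else none

/-- The transformed thread `T''`: `lk l; x := 1; ul l; y := 1; y := 2`. -/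
def TtransInv : Thread (Fin 2) (Fin 1) where
  H := Fin 6
  h0 := 0
  step := stepTransInv
  wf := by
    intro h s a h' s' hst
    fin_cases h <;> simp [stepTransInv] at hst
    all_goals obtain ⟨rfl, rfl, rfl⟩ := hst
    all_goals constructor
    all_goals first
      | (intro hx; exact absurd rfl (hx _))
      | (intro _; rfl)
      | (intro x hx y hy
         cases hx
         exact Function.update_of_ne hy _ _)
      | (intro x hx; exact absurd hx (by simp))

/-! Auxiliary machinery for the proof. -/

/-- Action of `T''` at counter `i`. -/
def actTI : ℕ → Action (Fin 2) (Fin 1)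
  | 0 => Action.lk 0
  | 1 => Action.wr 0
  | 2 => Action.ul 0
  | 3 => Action.wr 1
  | _ => Action.wr 1

/-- Next-state function of `T''` at counter `i`. -/
def nsTI : ℕ → (Fin 2 → ℤ) → (Fin 2 → ℤ)
  | 1, s => Function.update s 0 1
  | 3, s => Function.update s 1 1
  | 4, s => Function.update s 1 2
  | _, s => s

/-- State of `T''` after `i` steps from `s`. -/
def stTI : ℕ → (Fin 2 → ℤ) → (Fin 2 → ℤ)
  | 0, s => s
  | (i+1), s => nsTI i (stTI i s)

lemma stepTI (i : ℕ) (hi : i < 5) (s : Fin 2 → ℤ) :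
    stepTransInv ⟨i, by omega⟩ s = some (actTI i, ⟨i + 1, by omega⟩, nsTI i s) := by
  interval_cases i <;> rfl

lemma stepTI5 (s : Fin 2 → ℤ) : stepTransInv ⟨5, by omega⟩ s = none := rfl

/-- Action of `T` at counter `i`. -/
def actO : ℕ → Action (Fin 2) (Fin 1)
  | 0 => Action.lk 0
  | 1 => Action.wr 0
  | 2 => Action.wr 1
  | 3 => Action.ul 0
  | _ => Action.wr 1

/-- Next-state function of `T` at counter `i`. -/
def nsO : ℕ → (Fin 2 → ℤ) → (Fin 2 → ℤ)
  | 1, s => Function.update s 0 1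
  | 2, s => Function.update s 1 1
  | 4, s => Function.update s 1 2
  | _, s => s

/-- State of `T` after `i` steps from `s`. -/
def stO : ℕ → (Fin 2 → ℤ) → (Fin 2 → ℤ)
  | 0, s => s
  | (i+1), s => nsO i (stO i s)

lemma starstep_TI {s : Fin 2 → ℤ} {l : Fin 1} {Ra Wa Rb Wb : Set (Fin 2)} {h' : Fin 6}
    {s' : Fin 2 → ℤ}
    (hs : StarStep TtransInv (0 : Fin 6) s l Ra Wa Rb Wb h' s') :
    h' = 5 ∧ Ra = ∅ ∧ Wa = {0} ∧ Rb = ∅ ∧ Wb = {1} ∧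
      s' = Function.update (Function.update s 0 1) 1 2 := by
  obtain ⟨n, f, hn, k, hpc0, hst0, hpcl, hstl, hact0, hactk, hmemA, hmemB, hend,
    hRa, hWa, hRb, hWb⟩ := hs
  have key : ∀ i : ℕ, ∀ hi : i < n + 1,
      i ≤ 5 ∧ (f.pc ⟨i, hi⟩).val = i ∧ f.st ⟨i, hi⟩ = stTI i s := by
    intro i
    induction i with
    | zero =>
      intro hi
      have e : (⟨0, hi⟩ : Fin (n+1)) = 0 := by ext; simp
      rw [e, hpc0, hst0]
      exact ⟨by omega, rfl, rfl⟩
    | succ i ih =>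
      intro hi
      have hi' : i < n + 1 := by omega
      obtain ⟨h5, hpc, hst⟩ := ih hi'
      have hstep := f.steps ⟨i, by omega⟩
      have ec : (Fin.castSucc (⟨i, by omega⟩ : Fin n)) = (⟨i, hi'⟩ : Fin (n+1)) := rfl
      have es : (Fin.succ (⟨i, by omega⟩ : Fin n)) = (⟨i + 1, hi⟩ : Fin (n+1)) := rfl
      rw [ec, es, hst] at hstep
      have epc : f.pc ⟨i, hi'⟩ = (⟨i, by omega⟩ : Fin 6) := Fin.ext hpc
      simp only [epc] at hstep
      have hi5 : i < 5 := by
        by_contra hcon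
        have hie : i = 5 := by omega
        subst hie
        have : TtransInv.step (⟨5, by omega⟩ : Fin 6) (stTI 5 s) = none := stepTI5 (stTI 5 s)
        rw [this] at hstep
        cases hstep
      have hs2 : (some (actTI i, (⟨i + 1, by omega⟩ : Fin 6), nsTI i (stTI i s)) :
          Option (Action (Fin 2) (Fin 1) × Fin 6 × (Fin 2 → ℤ)))
          = some (f.act ⟨i, by omega⟩, f.pc ⟨i + 1, hi⟩, f.st ⟨i + 1, hi⟩) :=
        (stepTI i hi5 (stTI i s)).symm.trans hstep
      have h2 : (⟨i + 1, by omega⟩ : Fin 6) = f.pc ⟨i + 1, hi⟩ := by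
        exact congrArg (fun p => p.2.1) (Option.some.inj hs2)
      have h3 : nsTI i (stTI i s) = f.st ⟨i + 1, hi⟩ := by
        exact congrArg (fun p => p.2.2) (Option.some.inj hs2)
      exact ⟨by omega, by rw [← h2], h3.symm⟩
  have hacts : ∀ i : ℕ, ∀ hi : i < n, f.act ⟨i, hi⟩ = actTI i := by
    intro i hi
    obtain ⟨h5, hpc, hst⟩ := key i (by omega)
    have hstep := f.steps ⟨i, hi⟩
    have ec : (Fin.castSucc (⟨i, hi⟩ : Fin n)) = (⟨i, by omega⟩ : Fin (n+1)) := rfl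
    rw [ec, hst] at hstep
    have epc : f.pc ⟨i, by omega⟩ = (⟨i, by omega⟩ : Fin 6) := Fin.ext hpc
    simp only [epc] at hstep
    have hi5 : i < 5 := by
      by_contra hcon
      have hie : i = 5 := by omega
      subst hie
      have : TtransInv.step (⟨5, by omega⟩ : Fin 6) (stTI 5 s) = none := stepTI5 (stTI 5 s)
      rw [this] at hstep
      cases hstep
    have hs2 : (some (actTI i, (⟨i + 1, by omega⟩ : Fin 6), nsTI i (stTI i s)) :
        Option (Action (Fin 2) (Fin 1) × Fin 6 × (Fin 2 → ℤ)))
        = some (f.act ⟨i, hi⟩, f.pc (Fin.succ ⟨i, hi⟩), f.st (Fin.succ ⟨i, hi⟩)) :=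
      (stepTI i hi5 (stTI i s)).symm.trans hstep
    exact (congrArg (fun p => p.1) (Option.some.inj hs2)).symm
  -- n = 5
  have hn5 : n ≤ 5 := (key n (by omega)).1
  have hpcn : (f.pc (Fin.last n)).val = n := (key n (by omega)).2.1
  have hstn : f.st (Fin.last n) = stTI n s := (key n (by omega)).2.2
  have hne5 : n = 5 := by
    by_contra hcon
    have hn4 : n < 5 := by omega
    have epc : h' = (⟨n, by omega⟩ : Fin 6) := by rw [← hpcl]; exact Fin.ext hpcn
    have hstep : TtransInv.step h' s' = some (actTI n, ⟨n + 1, by omega⟩, nsTI n s') := by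
      rw [epc]; exact stepTI n hn4 s'
    rcases hend with ⟨l'', h'', s'', hsome⟩ | hnone
    · have hthis := congrArg (fun p => p.1) (Option.some.inj (hstep.symm.trans hsome))
      simp only at hthis
      interval_cases n <;> simp [actTI] at hthis
    · rw [hstep] at hnone
      cases hnone
  subst hne5
  have hactall : ∀ i : Fin 5, f.act i = actTI i.val := by
    intro i
    have := hacts i.val i.isLt
    simpa using this
  have hk2 : (k : ℕ) = 2 := by
    have hk := (hactall k).symm.trans hactk
    rcases k with ⟨kv, hkv⟩
    interval_cases kv <;> simp_all [actTI]
  refine ⟨?_, ?_, ?_, ?_, ?_, ?_⟩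
  · rw [← hpcl]; exact Fin.ext (by rw [hpcn]; rfl)
  · rw [hRa]; ext x
    simp only [Set.mem_setOf_eq, Set.mem_empty_iff_false, iff_false, not_exists]
    intro i hcon
    obtain ⟨h1, h2, h3⟩ := hcon
    rw [hk2] at h2
    have hv : (i : ℕ) = 1 := by omega
    rw [hactall i, hv] at h3
    simp [actTI] at h3
  · rw [hWa]; ext x
    simp only [Set.mem_setOf_eq, Set.mem_singleton_iff]
    constructor
    · rintro ⟨i, h1, h2, h3⟩
      rw [hk2] at h2
      have hv : (i : ℕ) = 1 := by omega
      rw [hactall i, hv] at h3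
      simpa [actTI] using h3.symm
    · rintro rfl
      refine ⟨⟨1, by omega⟩, Nat.one_pos, ?_, by exact hactall ⟨1, by omega⟩⟩
      rw [hk2]; exact Nat.one_lt_two
  · rw [hRb]; ext x
    simp only [Set.mem_setOf_eq, Set.mem_empty_iff_false, iff_false, not_exists]
    intro i hcon
    obtain ⟨h1, h2⟩ := hcon
    rw [hk2] at h1
    rw [hactall i] at h2
    have hv : (i : ℕ) = 3 ∨ (i : ℕ) = 4 := by omega
    rcases hv with hv | hv <;> rw [hv] at h2 <;> simp [actTI] at h2
  · rw [hWb]; ext x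
    simp only [Set.mem_setOf_eq, Set.mem_singleton_iff]
    constructor
    · rintro ⟨i, h1, h2⟩
      rw [hk2] at h1
      rw [hactall i] at h2
      have hv : (i : ℕ) = 3 ∨ (i : ℕ) = 4 := by omega
      rcases hv with hv | hv <;> rw [hv] at h2 <;>
        simpa [actTI] using h2.symm
    · rintro rfl
      refine ⟨⟨3, by omega⟩, ?_, by exact hactall ⟨3, by omega⟩⟩
      rw [hk2]; exact Nat.lt.base 2
  · rw [← hstl, hstn]
    simp [stTI, nsTI, Function.update_idem]

lemma no_starstep_TI5 {s : Fin 2 → ℤ} {l : Fin 1} {Ra Wa Rb Wb : Set (Fin 2)} {h' : Fin 6}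
    {s' : Fin 2 → ℤ} :
    ¬ StarStep TtransInv (5 : Fin 6) s l Ra Wa Rb Wb h' s' := by
  rintro ⟨n, f, hn, k, hpc0, hst0, -, -, hact0, -⟩
  have hstep := f.steps ⟨0, hn⟩
  have e : (Fin.castSucc (⟨0, hn⟩ : Fin n)) = (0 : Fin (n+1)) := by
    ext; simp
  rw [e, hpc0] at hstep
  simp [TtransInv, stepTransInv] at hstep

lemma starstep_O (s : Fin 2 → ℤ) :
    StarStep Torig (0 : Fin 6) s 0 ∅ {0, 1} ∅ {1} (5 : Fin 6)
      (Function.update (Function.update s 0 1) 1 2) := by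
  refine ⟨5, ⟨fun i => ⟨i.val, i.isLt⟩, fun i => stO i.val s, fun i => actO i.val,
      by intro kk; fin_cases kk <;> rfl⟩,
    by omega, ⟨3, by omega⟩, rfl, rfl, rfl, ?_, by rfl, by rfl, ?_, ?_, ?_, ?_, ?_, ?_, ?_⟩
  · show stO 5 s = _
    simp [stO, nsO, Function.update_idem]
  · intro i h1 h2
    fin_cases i <;> simp_all [isMem, actO]
  · intro i h1
    fin_cases i <;> simp_all [isMem, actO]
  · exact Or.inr rfl
  · ext x
    simp only [Set.mem_empty_iff_false, Set.mem_setOf_eq, false_iff, not_exists]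
    intro i
    fin_cases i <;> simp [actO]
  · ext x
    constructor
    · rintro hx
      fin_cases x
      · exact ⟨⟨1, by omega⟩, by simp, by simp, by rfl⟩
      · exact ⟨⟨2, by omega⟩, by simp, by simp, by rfl⟩
    · rintro ⟨i, h1, h2, h3⟩
      fin_cases i <;> simp_all [actO] <;> simp [← h3]
  · ext x
    simp only [Set.mem_empty_iff_false, Set.mem_setOf_eq, false_iff, not_exists]
    intro i
    fin_cases i <;> simp [actO]
  · ext x
    constructor
    · rintro hx
      fin_cases x
      · simp at hx
      · exact ⟨⟨4, by omega⟩, by simp, by rfl⟩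
    · rintro ⟨i, h1, h2⟩
      fin_cases i <;> simp_all [actO] <;> simp [← h2]

/-- Inverse roach motel reordering is a valid refinement: `check(T'',T)` holds. -/
theorem inverse_roach_motel_check : check TtransInv Torig := by
  intro t' ht'
  obtain ⟨h, hh0, hsteps, hglue⟩ := ht'
  by_cases hm : t'.m = 0
  · refine ⟨⟨0, fun _ => 0, fun _ => fun _ => 0, fun _ => fun _ => 0,
      fun _ => ∅, fun _ => ∅, fun _ => ∅, fun _ => ∅⟩, ?_, ?_⟩
    · exact ⟨fun _ => Torig.h0, rfl, fun j hj => absurd hj (Nat.not_lt_zero j),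
        fun j hj1 hj2 => absurd hj2 (Nat.not_lt_zero j)⟩
    · left
      exact ⟨hm, fun j hj => absurd hj (Nat.not_lt_zero j), fun j hj => absurd hj (Nat.not_lt_zero j),
        fun j hj => absurd hj (Nat.not_lt_zero j), fun j hj => absurd hj (Nat.not_lt_zero j),
        fun j hj => absurd hj (Nat.not_lt_zero j), fun j hj => absurd hj (Nat.not_lt_zero j),
        fun j hj1 hj2 => absurd hj2 (Nat.not_lt_zero j), fun j hj => absurd hj (Nat.not_lt_zero j)⟩
  · have h1 : 0 < t'.m := Nat.pos_of_ne_zero hm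
    have hs0 := hsteps 0 h1
    rw [hh0] at hs0
    have hs0' : StarStep TtransInv (0 : Fin 6) (t'.sE 0) (t'.lkOf 0)
        (t'.RE 0) (t'.WE 0) (t'.RO 0) (t'.WO 0) (h 1) (t'.sO 0) := hs0
    obtain ⟨hh1, hRa, hWa, hRb, hWb, hsO⟩ := starstep_TI hs0'
    have hm1 : t'.m = 1 := by
      by_contra hne
      have h2 : 1 < t'.m := by omega
      have hs1 := hsteps 1 h2
      rw [hh1] at hs1
      exact no_starstep_TI5 hs1
    refine ⟨⟨1, fun _ => 0, fun _ => t'.sE 0,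
      fun _ => Function.update (Function.update (t'.sE 0) 0 1) 1 2,
      fun _ => ∅, fun _ => {0, 1}, fun _ => ∅, fun _ => {1}⟩, ?_, ?_⟩
    · refine ⟨fun j => if j = 0 then (0 : Fin 6) else (5 : Fin 6), rfl, ?_, fun j hj1 hj2 => absurd hj1 (by have h1' := Nat.lt_one_iff.mp hj2; omega)⟩
      intro j hj
      have hj0 : j = 0 := by
          have hj' : j < 1 := hj
          omega
      subst hj0
      simpa using starstep_O (t'.sE 0)
    · left
      refine ⟨hm1, fun j hj => Subsingleton.elim _ _, ?_, ?_, ?_, ?_, ?_,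
        fun j hj1 hj2 => absurd hj1 (by have h1' := Nat.lt_one_iff.mp hj2; omega), ?_⟩
      · intro j hj
        have hj0 : j = 0 := by
          have hj' : j < 1 := hj
          omega
        subst hj0
        rw [hRa]
        exact Set.empty_subset _
      · intro j hj
        have hj0 : j = 0 := by
          have hj' : j < 1 := hj
          omega
        subst hj0
        rw [hWa]
        intro x hx
        simp only [Set.mem_singleton_iff] at hx
        subst hx
        simp
      · intro j hj
        have hj0 : j = 0 := by
          have hj' : j < 1 := hj
          omega
        subst hj0
        rw [hRb]
        exact Set.empty_subset _
      · intro j hj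
        have hj0 : j = 0 := by
          have hj' : j < 1 := hj
          omega
        subst hj0
        rw [hWb]
      · intro j hj x hx
        have hj0 : j = 0 := by
          have hj' : j < 1 := hj
          omega
        subst hj0
        rfl
      · intro j hj x hx
        have hj0 : j = 0 := by
          have hj' : j < 1 := hj
          omega
        subst hj0
        rw [hsO]

end DRF
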